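/- arXiv:2508.06257 — 2 statements merged into one kernel-verified Lean document; each statement's English description precedes it below -/
import Mathlib

section
/- Let {Z^(m,0)} be any initial point and, for each step k ≥ 0, define the Newton-type update Z^(m,k+1) = (1/9)(S^(m))² Z^(m,k) + (1/9)(3 I_N + S^(m)) ( Σ_{e=1}^M P_{em} Z^(e,k) + Z_init^(m) ) simultaneously for every m ∈ {1,…,M}. Then the objective is monotonically non-increasing across iterations: H({Z^(m,k+1)}_{m=1}^M) ≤ H({Z^(m,k)}_{m=1}^M) for all k ≥ 0. -/
open scoped BigOperators
open Matrix

attribute [local instance] Matrix.frobeniusNormedAddCommGroup Matrix.frobeniusNormedSpace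

/-- The multiplex graph objective
`H({Z^(m)}) = (1/4) Σ_m Σ_{i,j} S^(m)_{ij} ‖Z_i^(m) − Z_j^(m)‖₂²
  + (1/4) Σ_{e,n} P_{en} ‖Z^(e) − Z^(n)‖_F² + (1/2) Σ_m ‖Z^(m) − Z_init^(m)‖_F²`. -/
noncomputable def multiObj {N d M : ℕ}
    (S : Fin M → Matrix (Fin N) (Fin N) ℝ) (P : Matrix (Fin M) (Fin M) ℝ)
    (Zinit : Fin M → Matrix (Fin N) (Fin d) ℝ)
    (Z : Fin M → Matrix (Fin N) (Fin d) ℝ) : ℝ :=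
  (1 / 4) * ∑ m, ∑ i, ∑ j, S m i j * ∑ l, (Z m i l - Z m j l) ^ 2
    + (1 / 4) * ∑ e, ∑ n, P e n * ∑ i, ∑ l, (Z e i l - Z n i l) ^ 2
    + (1 / 2) * ∑ m, ∑ i, ∑ l, (Z m i l - Zinit m i l) ^ 2

namespace StmtAux

variable {m n : Type*} [Fintype m] [Fintype n]

/-- entrywise inner product -/
def ipv (X Y : m → n → ℝ) : ℝ := ∑ i, ∑ l, X i l * Y i l

/-- `⟨S·X, Y⟩` in raw-sum form -/
def crs (S : m → m → ℝ) (X Y : m → n → ℝ) : ℝ :=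
  ∑ i, ∑ j, S i j * ∑ l, X j l * Y i l

lemma ipv_comm (X Y : m → n → ℝ) : ipv X Y = ipv Y X := by
  simp [ipv, mul_comm]

lemma ipv_self_nonneg (X : m → n → ℝ) : 0 ≤ ipv X X := by
  refine Finset.sum_nonneg fun i _ => Finset.sum_nonneg fun l _ => mul_self_nonneg _

lemma diag_row (S : m → m → ℝ) (hrow : ∀ i, ∑ j, S i j = 1) (X Y : m → n → ℝ) :
    ∑ i, ∑ j, S i j * ∑ l, X i l * Y i l = ipv X Y := by
  unfold ipv
  refine Finset.sum_congr rfl fun i _ => ?_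
  rw [← Finset.sum_mul, hrow, one_mul]

lemma diag_col (S : m → m → ℝ) (hsymm : ∀ i j, S i j = S j i)
    (hrow : ∀ i, ∑ j, S i j = 1) (X Y : m → n → ℝ) :
    ∑ i, ∑ j, S i j * ∑ l, X j l * Y j l = ipv X Y := by
  rw [Finset.sum_comm]
  unfold ipv
  refine Finset.sum_congr rfl fun j _ => ?_
  rw [← Finset.sum_mul]
  have : ∑ i, S i j = 1 := by
    rw [Finset.sum_congr rfl fun i _ => hsymm i j, hrow]
  rw [this, one_mul]

lemma crs_symm (S : m → m → ℝ) (hsymm : ∀ i j, S i j = S j i) (X Y : m → n → ℝ) :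
    crs S X Y = crs S Y X := by
  unfold crs
  rw [Finset.sum_comm]
  refine Finset.sum_congr rfl fun a _ => Finset.sum_congr rfl fun b _ => ?_
  rw [hsymm b a]
  congr 1
  exact Finset.sum_congr rfl fun l _ => mul_comm _ _

lemma crs_ge (S : m → m → ℝ) (hsymm : ∀ i j, S i j = S j i)
    (hnn : ∀ i j, 0 ≤ S i j) (hrow : ∀ i, ∑ j, S i j = 1) (X : m → n → ℝ) :
    -(ipv X X) ≤ crs S X X := by
  have h0 : 0 ≤ ∑ i, ∑ j, S i j * ∑ l, (X i l + X j l) ^ 2 := by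
    refine Finset.sum_nonneg fun i _ => Finset.sum_nonneg fun j _ => ?_
    exact mul_nonneg (hnn i j) (Finset.sum_nonneg fun l _ => sq_nonneg _)
  have hexp : ∑ i, ∑ j, S i j * ∑ l, (X i l + X j l) ^ 2
      = 2 * ipv X X + 2 * crs S X X := by
    have inner : ∀ i j : m, S i j * ∑ l, (X i l + X j l) ^ 2
        = S i j * ∑ l, X i l * X i l + (2 * (S i j * ∑ l, X j l * X i l)
          + S i j * ∑ l, X j l * X j l) := by
      intro i j
      have : ∑ l, (X i l + X j l) ^ 2
          = ∑ l, X i l * X i l + (2 * ∑ l, X j l * X i l + ∑ l, X j l * X j l) := by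
        rw [Finset.mul_sum, ← Finset.sum_add_distrib, ← Finset.sum_add_distrib]
        exact Finset.sum_congr rfl fun l _ => by ring
      rw [this]; ring
    rw [Finset.sum_congr rfl fun i _ => Finset.sum_congr rfl fun j _ => inner i j]
    simp only [Finset.sum_add_distrib]
    rw [diag_row S hrow X X, diag_col S hsymm hrow X X]
    simp only [← Finset.mul_sum]
    unfold crs
    ring
  linarith

/-- quadratic cross-term identity -/
lemma q_eq (S : m → m → ℝ) (hsymm : ∀ i j, S i j = S j i)
    (hrow : ∀ i, ∑ j, S i j = 1) (X Y : m → n → ℝ) :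
    ∑ i, ∑ j, S i j * ∑ l, (X i l - X j l) * (Y i l - Y j l)
      = 2 * ipv X Y - 2 * crs S X Y := by
  have inner : ∀ i j : m, S i j * ∑ l, (X i l - X j l) * (Y i l - Y j l)
      = S i j * ∑ l, X i l * Y i l - (S i j * ∑ l, Y j l * X i l)
        - (S i j * ∑ l, X j l * Y i l) + S i j * ∑ l, X j l * Y j l := by
    intro i j
    have : ∑ l, (X i l - X j l) * (Y i l - Y j l)
        = ∑ l, X i l * Y i l - ∑ l, Y j l * X i l - ∑ l, X j l * Y i l
          + ∑ l, X j l * Y j l := by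
      rw [← Finset.sum_sub_distrib, ← Finset.sum_sub_distrib, ← Finset.sum_add_distrib]
      exact Finset.sum_congr rfl fun l _ => by ring
    rw [this]; ring
  rw [Finset.sum_congr rfl fun i _ => Finset.sum_congr rfl fun j _ => inner i j]
  simp only [Finset.sum_add_distrib, Finset.sum_sub_distrib]
  rw [diag_row S hrow X Y, diag_col S hsymm hrow X Y]
  have h2 : ∑ i, ∑ j, S i j * ∑ l, Y j l * X i l = crs S X Y := by
    rw [show crs S X Y = crs S Y X from crs_symm S hsymm X Y]; rfl
  rw [h2]
  unfold crs
  ring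

/-- squared expansion, no hypotheses -/
lemma expand_sq (S : m → m → ℝ) (X Y : m → n → ℝ) :
    ∑ i, ∑ j, S i j * ∑ l, ((X i l + Y i l) - (X j l + Y j l)) ^ 2
      = ∑ i, ∑ j, S i j * ∑ l, (X i l - X j l) ^ 2
        + 2 * ∑ i, ∑ j, S i j * ∑ l, (X i l - X j l) * (Y i l - Y j l)
        + ∑ i, ∑ j, S i j * ∑ l, (Y i l - Y j l) ^ 2 := by
  have inner : ∀ i j : m, S i j * ∑ l, ((X i l + Y i l) - (X j l + Y j l)) ^ 2
      = S i j * ∑ l, (X i l - X j l) ^ 2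
        + 2 * (S i j * ∑ l, (X i l - X j l) * (Y i l - Y j l))
        + S i j * ∑ l, (Y i l - Y j l) ^ 2 := by
    intro i j
    have : ∑ l, ((X i l + Y i l) - (X j l + Y j l)) ^ 2
        = ∑ l, (X i l - X j l) ^ 2 + (2 * ∑ l, (X i l - X j l) * (Y i l - Y j l)
          + ∑ l, (Y i l - Y j l) ^ 2) := by
      rw [Finset.mul_sum, ← Finset.sum_add_distrib, ← Finset.sum_add_distrib]
      exact Finset.sum_congr rfl fun l _ => by ring
    rw [this]; ring
  rw [Finset.sum_congr rfl fun i _ => Finset.sum_congr rfl fun j _ => inner i j]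
  simp only [Finset.sum_add_distrib, ← Finset.mul_sum]
  try ring

section MatrixConn

lemma ipv_mul_left (S : Matrix m m ℝ) (X Y : Matrix m n ℝ) :
    ipv (S * X) Y = crs S X Y := by
  unfold ipv crs
  refine Finset.sum_congr rfl fun i _ => ?_
  simp only [Matrix.mul_apply, Finset.sum_mul]
  rw [Finset.sum_comm]
  simp [Finset.mul_sum, mul_assoc]

lemma ipv_add_left (X Y W : Matrix m n ℝ) : ipv (X + Y) W = ipv X W + ipv Y W := by
  simp [ipv, Matrix.add_apply, add_mul, Finset.sum_add_distrib]

lemma ipv_sub_left (X Y W : Matrix m n ℝ) : ipv (X - Y) W = ipv X W - ipv Y W := by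
  simp [ipv, Matrix.sub_apply, sub_mul, Finset.sum_sub_distrib]

lemma ipv_neg_left (X W : Matrix m n ℝ) : ipv (-X) W = -ipv X W := by
  simp [ipv, Matrix.neg_apply, Finset.sum_neg_distrib]

lemma ipv_smul_left (c : ℝ) (X W : Matrix m n ℝ) : ipv (c • X) W = c * ipv X W := by
  simp [ipv, Matrix.smul_apply, smul_eq_mul, Finset.mul_sum, mul_assoc]

lemma ipv_sum_left {ι : Type*} [Fintype ι] (A : ι → Matrix m n ℝ) (W : Matrix m n ℝ) :
    ipv (∑ e, A e) W = ∑ e, ipv (A e) W := by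
  unfold ipv
  have h : ∀ i l, (∑ e, A e) i l * W i l = ∑ e, A e i l * W i l := fun i l =>
    (congrArg (· * W i l) (Matrix.sum_apply i l Finset.univ A)).trans (Finset.sum_mul _ _ _)
  refine Eq.trans (Finset.sum_congr rfl fun i _ => Finset.sum_congr rfl fun l _ => h i l) ?_
  exact (Finset.sum_congr rfl fun i _ => Finset.sum_comm).trans Finset.sum_comm

lemma ipv_pair {M' : Type*} [Fintype M'] (X Y : M' → Matrix m n ℝ) :
    ipv (fun e (p : m × n) => X e p.1 p.2) (fun e p => Y e p.1 p.2)
      = ∑ e, ipv (X e) (Y e) := by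
  simp [ipv, Fintype.sum_prod_type]

lemma crs_pair {M' : Type*} [Fintype M'] (P : M' → M' → ℝ) (X Y : M' → Matrix m n ℝ) :
    crs P (fun e (p : m × n) => X e p.1 p.2) (fun e p => Y e p.1 p.2)
      = ∑ e, ∑ n', P e n' * ipv (X n') (Y e) := by
  simp [crs, ipv, Fintype.sum_prod_type]

lemma ipv_add_right (W X Y : Matrix m n ℝ) : ipv W (X + Y) = ipv W X + ipv W Y := by
  have h1 := ipv_add_left X Y W
  have h2 := ipv_comm W (X + Y)
  have h3 := ipv_comm W X
  have h4 := ipv_comm W Y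
  linarith

lemma ipv_smul_right (c : ℝ) (W X : Matrix m n ℝ) : ipv W (c • X) = c * ipv W X := by
  have h1 := ipv_smul_left c X W
  have h2 := ipv_comm W (c • X)
  have h3 := ipv_comm W X
  rw [h2, h1, h3]

lemma ipv_mul_right (S : Matrix m m ℝ) (X Y : Matrix m n ℝ) :
    ipv X (S * Y) = crs S Y X := by
  exact (ipv_comm _ _).trans (ipv_mul_left S Y X)

end MatrixConn

section Terms

omit [Fintype m] [Fintype n] in
lemma symm_entry {S : Matrix m m ℝ} (h : Sᵀ = S) : ∀ i j, S i j = S j i :=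
  fun i j => congrFun (congrFun h j) i

lemma term1_expand (S : Matrix m m ℝ) (hsymm : ∀ i j, S i j = S j i)
    (hrow : ∀ i, ∑ j, S i j = 1) (A D : Matrix m n ℝ) :
    ∑ i, ∑ j, S i j * ∑ l, ((A i l + D i l) - (A j l + D j l)) ^ 2
      = ∑ i, ∑ j, S i j * ∑ l, (A i l - A j l) ^ 2
        + (4 * ipv A D - 4 * crs S A D) + (2 * ipv D D - 2 * crs S D D) := by
  rw [expand_sq S A D, q_eq S hsymm hrow A D]
  have hDD : ∑ i, ∑ j, S i j * ∑ l, (D i l - D j l) ^ 2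
      = ∑ i, ∑ j, S i j * ∑ l, (D i l - D j l) * (D i l - D j l) := by
    simp [pow_two]
  rw [hDD, q_eq S hsymm hrow D D]
  ring

lemma term3_expand (A D Zi : Matrix m n ℝ) :
    ∑ i, ∑ l, ((A i l + D i l) - Zi i l) ^ 2
      = ∑ i, ∑ l, (A i l - Zi i l) ^ 2
        + (2 * ipv A D - 2 * ipv Zi D) + ipv D D := by
  have h : ∀ i l, ((A i l + D i l) - Zi i l) ^ 2
      = (A i l - Zi i l) ^ 2 + (2 * (A i l * D i l) - 2 * (Zi i l * D i l)
        + D i l * D i l) := fun i l => by ring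
  simp only [h, Finset.sum_add_distrib, Finset.sum_sub_distrib, ← Finset.mul_sum]
  unfold ipv
  ring

lemma pair_sum (F : m → n → ℝ) :
    ∑ i, ∑ l, F i l = ∑ p : m × n, F p.1 p.2 := by
  rw [Fintype.sum_prod_type]

lemma term2_expand {M' : Type*} [Fintype M'] (P : Matrix M' M' ℝ)
    (hsymm : ∀ i j, P i j = P j i) (hrow : ∀ i, ∑ j, P i j = 1)
    (A D : M' → Matrix m n ℝ) :
    ∑ e, ∑ n', P e n' * ∑ i, ∑ l,
        ((A e i l + D e i l) - (A n' i l + D n' i l)) ^ 2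
      = ∑ e, ∑ n', P e n' * ∑ i, ∑ l, (A e i l - A n' i l) ^ 2
        + (4 * ∑ mm, ipv (A mm) (D mm) - 4 * ∑ e, ∑ n', P e n' * ipv (A n') (D e))
        + (2 * ∑ mm, ipv (D mm) (D mm)
            - 2 * ∑ e, ∑ n', P e n' * ipv (D n') (D e)) := by
  have cv : ∀ (X : M' → Matrix m n ℝ) e n',
      (∑ i, ∑ l, (X e i l - X n' i l) ^ 2)
        = ∑ p : m × n, ((fun e p => X e p.1 p.2) e p - (fun e p => X e p.1 p.2) n' p) ^ 2 :=
    fun X e n' => pair_sum _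
  have cv2 : ∀ e n', (∑ i, ∑ l, ((A e i l + D e i l) - (A n' i l + D n' i l)) ^ 2)
      = ∑ p : m × n, (((fun e p => A e p.1 p.2) e p + (fun e p => D e p.1 p.2) e p)
          - ((fun e p => A e p.1 p.2) n' p + (fun e p => D e p.1 p.2) n' p)) ^ 2 :=
    fun e n' => pair_sum _
  calc ∑ e, ∑ n', P e n' * ∑ i, ∑ l, ((A e i l + D e i l) - (A n' i l + D n' i l)) ^ 2
      = ∑ e, ∑ n', P e n' * ∑ p : m × n,
          (((fun e p => A e p.1 p.2) e p + (fun e p => D e p.1 p.2) e p)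
            - ((fun e p => A e p.1 p.2) n' p + (fun e p => D e p.1 p.2) n' p)) ^ 2 := by
        exact Finset.sum_congr rfl fun e _ => Finset.sum_congr rfl fun n' _ => by rw [cv2]
    _ = ∑ e, ∑ n', P e n' * ∑ p : m × n,
          ((fun e p => A e p.1 p.2) e p - (fun e p => A e p.1 p.2) n' p) ^ 2
        + (4 * ipv (fun e (p : m × n) => A e p.1 p.2) (fun e p => D e p.1 p.2)
            - 4 * crs P (fun e (p : m × n) => A e p.1 p.2) (fun e p => D e p.1 p.2))
        + (2 * ipv (fun e (p : m × n) => D e p.1 p.2) (fun e p => D e p.1 p.2)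
            - 2 * crs P (fun e (p : m × n) => D e p.1 p.2) (fun e p => D e p.1 p.2)) := by
        exact term1_expand P hsymm hrow _ _
    _ = _ := by
        simp only [ipv_pair, crs_pair]
        have hbase : ∑ e, ∑ n', P e n' * ∑ p : m × n,
            ((fun e p => A e p.1 p.2) e p - (fun e p => A e p.1 p.2) n' p) ^ 2
              = ∑ e, ∑ n', P e n' * ∑ i, ∑ l, (A e i l - A n' i l) ^ 2 :=
          Finset.sum_congr rfl fun e _ => Finset.sum_congr rfl fun n' _ => by
            rw [← cv A e n']
        rw [hbase]
        linarith [crs_pair P A D, crs_pair P D D]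

lemma swap_P (P : Matrix m m ℝ) (hsymm : ∀ i j, P i j = P j i) (f : m → m → ℝ) :
    ∑ e, ∑ n', P e n' * f e n' = ∑ e, ∑ n', P e n' * f n' e := by
  rw [Finset.sum_comm]
  refine Finset.sum_congr rfl fun a _ => Finset.sum_congr rfl fun b _ => ?_
  rw [hsymm b a]

end Terms

end StmtAux


open StmtAux

/-- the Newton-type update
`Z^(m,k+1) = (1/9)(S^(m))² Z^(m,k) + (1/9)(3 I_N + S^(m)) (Σ_e P_{em} Z^(e,k) + Z_init^(m))`
is monotonically non-increasing for the objective `H`. -/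
theorem stmt1 {N d M : ℕ} (hN : 0 < N) (hd : 0 < d) (hM : 0 < M)
    (S : Fin M → Matrix (Fin N) (Fin N) ℝ) (P : Matrix (Fin M) (Fin M) ℝ)
    (Zinit : Fin M → Matrix (Fin N) (Fin d) ℝ)
    (hS_symm : ∀ m, (S m)ᵀ = S m)
    (hS_nonneg : ∀ m i j, 0 ≤ S m i j)
    (hS_row : ∀ m i, ∑ j, S m i j = 1)
    (hP_symm : Pᵀ = P)
    (hP_nonneg : ∀ e n, 0 ≤ P e n)
    (hP_row : ∀ e, ∑ n, P e n = 1)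
    (Z : ℕ → Fin M → Matrix (Fin N) (Fin d) ℝ)
    (hupd : ∀ k m, Z (k + 1) m =
      (9 : ℝ)⁻¹ • ((S m * S m) * Z k m)
        + (9 : ℝ)⁻¹ • (((3 : ℝ) • (1 : Matrix (Fin N) (Fin N) ℝ) + S m)
            * ((∑ e, P e m • Z k e) + Zinit m))) :
    ∀ k, multiObj S P Zinit (Z (k + 1)) ≤ multiObj S P Zinit (Z k) := by
  intro k
  classical
  set D : Fin M → Matrix (Fin N) (Fin d) ℝ := fun mm => Z (k+1) mm - Z k mm with hDdef
  set G : Fin M → Matrix (Fin N) (Fin d) ℝ :=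
    fun mm => (3:ℝ) • Z k mm - S mm * Z k mm - (∑ e, P e mm • Z k e) - Zinit mm with hGdef
  have hsymm : ∀ mm, ∀ i j, S mm i j = S mm j i := fun mm => symm_entry (hS_symm mm)
  have hPsymm : ∀ i j, P i j = P j i := symm_entry hP_symm
  have hZ1 : ∀ mm i l, Z (k+1) mm i l = Z k mm i l + D mm i l := by
    intro mm i l
    simp [hDdef, Matrix.sub_apply]
  have hD : ∀ mm, D mm = (-(9:ℝ)⁻¹) • ((3:ℝ) • G mm + S mm * G mm) := by
    intro mm
    rw [hDdef, hGdef]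
    simp only []
    rw [hupd k mm]
    rw [Matrix.add_mul, Matrix.smul_mul, Matrix.one_mul, Matrix.mul_assoc]
    simp only [Matrix.mul_add, Matrix.mul_sub, Matrix.mul_smul]
    module
  -- expansion of the linear term
  have hGip : ∑ mm, ipv (G mm) (D mm)
      = 3 * ∑ mm, ipv (Z k mm) (D mm) - ∑ mm, crs (S mm) (Z k mm) (D mm)
        - ∑ e, ∑ n', P e n' * ipv (Z k n') (D e) - ∑ mm, ipv (Zinit mm) (D mm) := by
    have h1 : ∀ mm, ipv (G mm) (D mm)
        = 3 * ipv (Z k mm) (D mm) - crs (S mm) (Z k mm) (D mm)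
          - (∑ e, P e mm * ipv (Z k e) (D mm)) - ipv (Zinit mm) (D mm) := by
      intro mm
      rw [hGdef]
      simp only []
      rw [ipv_sub_left, ipv_sub_left, ipv_sub_left, ipv_smul_left, ipv_mul_left]
      have hw : ipv (∑ e, P e mm • Z k e) (D mm) = ∑ e, P e mm * ipv (Z k e) (D mm) := by
        rw [ipv_sum_left]
        exact Finset.sum_congr rfl fun e _ => ipv_smul_left _ _ _
      exact congrArg (fun x => 3 * ipv (Z k mm) (D mm) - crs (S mm) (Z k mm) (D mm) - x
        - ipv (Zinit mm) (D mm)) hw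
    rw [Finset.sum_congr rfl fun mm _ => h1 mm]
    simp only [Finset.sum_sub_distrib, ← Finset.mul_sum]
    have hsw : ∑ mm, ∑ e, P e mm * ipv (Z k e) (D mm)
        = ∑ e, ∑ n', P e n' * ipv (Z k n') (D e) := by
      rw [Finset.sum_comm]
      exact swap_P P hPsymm _
    rw [hsw]
  -- key identity
  have key : multiObj S P Zinit (Z (k+1))
      = multiObj S P Zinit (Z k)
        + ∑ mm, ipv (G mm) (D mm)
        + (3/2) * ∑ mm, ipv (D mm) (D mm)
        - (1/2) * ∑ mm, crs (S mm) (D mm) (D mm)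
        - (1/2) * ∑ e, ∑ n', P e n' * ipv (D n') (D e) := by
    unfold multiObj
    simp only [hZ1]
    rw [Finset.sum_congr rfl (fun mm _ =>
          term1_expand (S mm) (hsymm mm) (hS_row mm) (Z k mm) (D mm)),
        term2_expand P hPsymm hP_row (Z k) D,
        Finset.sum_congr rfl (fun mm _ =>
          term3_expand (Z k mm) (D mm) (Zinit mm))]
    simp only [Finset.sum_add_distrib, Finset.sum_sub_distrib, ← Finset.mul_sum]
    rw [hGip]
    ring
  -- P-coupling bound
  have hineq1 : -(∑ mm, ipv (D mm) (D mm)) ≤ ∑ e, ∑ n', P e n' * ipv (D n') (D e) := by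
    have h := crs_ge P hPsymm hP_nonneg hP_row
      (fun e (p : Fin N × Fin d) => D e p.1 p.2)
    simp only [crs_pair, ipv_pair] at h
    exact h.trans_eq (crs_pair P D D)
  -- per-layer bound
  have hm : ∀ mm, ipv (G mm) (D mm) + 2 * ipv (D mm) (D mm)
      - (1/2) * crs (S mm) (D mm) (D mm) ≤ 0 := by
    intro mm
    have hc := hD mm
    have hSD : S mm * D mm
        = (-(9:ℝ)⁻¹) • ((3:ℝ) • (S mm * G mm) + S mm * (S mm * G mm)) := by
      rw [hc, Matrix.mul_smul, Matrix.mul_add, Matrix.mul_smul]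
    have b0 : 0 ≤ ipv (G mm) (G mm) := ipv_self_nonneg _
    have b1 : -(ipv (G mm) (G mm)) ≤ crs (S mm) (G mm) (G mm) :=
      crs_ge (S mm) (hsymm mm) (hS_nonneg mm) (hS_row mm) _
    have b2 : 0 ≤ crs (S mm) (G mm) (S mm * G mm) := by
      rw [← ipv_mul_left]
      exact ipv_self_nonneg _
    have b3 : -(crs (S mm) (G mm) (S mm * G mm))
        ≤ crs (S mm) (S mm * G mm) (S mm * G mm) := by
      have h := crs_ge (S mm) (hsymm mm) (hS_nonneg mm) (hS_row mm) (S mm * G mm)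
      rwa [ipv_mul_left] at h
    have hflip : crs (S mm) (S mm * G mm) (G mm) = crs (S mm) (G mm) (S mm * G mm) :=
      crs_symm (S mm) (hsymm mm) _ _
    have e1 : ipv (G mm) (D mm)
        = -(9:ℝ)⁻¹ * (3 * ipv (G mm) (G mm) + crs (S mm) (G mm) (G mm)) := by
      rw [hc, ipv_smul_right, ipv_add_right, ipv_smul_right, ipv_mul_right]
    have e2 : ipv (D mm) (D mm)
        = (81:ℝ)⁻¹ * (9 * ipv (G mm) (G mm) + 6 * crs (S mm) (G mm) (G mm)
            + crs (S mm) (G mm) (S mm * G mm)) := by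
      rw [hc]
      simp only [ipv_smul_left, ipv_smul_right, ipv_add_left, ipv_add_right]
      simp only [ipv_mul_left, ipv_mul_right]
      ring
    have e3 : crs (S mm) (D mm) (D mm)
        = (81:ℝ)⁻¹ * (9 * crs (S mm) (G mm) (G mm)
            + 6 * crs (S mm) (G mm) (S mm * G mm)
            + crs (S mm) (S mm * G mm) (S mm * G mm)) := by
      rw [← ipv_mul_left, hSD, hc]
      simp only [ipv_smul_left, ipv_smul_right, ipv_add_left, ipv_add_right]
      simp only [ipv_mul_left]
      simp only [hflip]
      ring
    rw [e1, e2, e3]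
    linarith
  have hsum : ∑ mm, (ipv (G mm) (D mm) + 2 * ipv (D mm) (D mm)
      - (1/2) * crs (S mm) (D mm) (D mm)) ≤ 0 :=
    Finset.sum_nonpos fun mm _ => hm mm
  simp only [Finset.sum_add_distrib, Finset.sum_sub_distrib, ← Finset.mul_sum] at hsum
  rw [key]
  linarith
end

section
/- For every m ∈ {1,…,M}, the gradient of the objective H with respect to the block variable Z^(m) (with the other blocks held fixed) is given by ∇_{Z^(m)} H({Z^(e)}_{e=1}^M) = (3 I_N − S^(m)) Z^(m) − Σ_{e=1}^M P_{em} Z^(e) − Z_init^(m). -/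
open scoped BigOperators
open Matrix

attribute [local instance] Matrix.frobeniusNormedAddCommGroup Matrix.frobeniusNormedSpace

noncomputable def coordCLM {N d : ℕ} (i : Fin N) (l : Fin d) :
    Matrix (Fin N) (Fin d) ℝ →L[ℝ] ℝ :=
  LinearMap.toContinuousLinearMap
    { toFun := fun X => X i l
      map_add' := fun _ _ => rfl
      map_smul' := fun _ _ => rfl }

@[simp] lemma coordCLM_apply {N d : ℕ} (i : Fin N) (l : Fin d)
    (X : Matrix (Fin N) (Fin d) ℝ) : coordCLM i l X = X i l := rfl

lemma hasFDerivAt_affine_sq {E : Type*} [NormedAddCommGroup E] [NormedSpace ℝ E]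
    (D : E →L[ℝ] ℝ) (k : ℝ) (x : E) :
    HasFDerivAt (fun X => (D X + k) ^ 2) ((2 * (D x + k)) • (D : E →L[ℝ] ℝ)) x := by
  have h := (D.hasFDerivAt (x := x)).add_const k
  have h2 := h.mul h
  have : (fun X => (D X + k) ^ 2) = fun X => (D X + k) * (D X + k) := by
    funext X; ring
  rw [this]
  exact h2.congr_fderiv (by rw [two_mul]; exact (add_smul _ _ _).symm)

/-- the gradient of `H` with respect to the block variable `Z^(m)`
(in the Frobenius inner product, with all other blocks held fixed) is
`(3 I_N − S^(m)) Z^(m) − Σ_e P_{em} Z^(e) − Z_init^(m)`. -/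
theorem stmt2 {N d M : ℕ} (hN : 0 < N) (hd : 0 < d) (hM : 0 < M)
    (S : Fin M → Matrix (Fin N) (Fin N) ℝ) (P : Matrix (Fin M) (Fin M) ℝ)
    (Zinit : Fin M → Matrix (Fin N) (Fin d) ℝ)
    (hS_symm : ∀ m, (S m)ᵀ = S m)
    (hS_nonneg : ∀ m i j, 0 ≤ S m i j)
    (hS_row : ∀ m i, ∑ j, S m i j = 1)
    (hP_symm : Pᵀ = P)
    (hP_nonneg : ∀ e n, 0 ≤ P e n)
    (hP_row : ∀ e, ∑ n, P e n = 1)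
    (Z : Fin M → Matrix (Fin N) (Fin d) ℝ) (m : Fin M) :
    ∃ L : Matrix (Fin N) (Fin d) ℝ →L[ℝ] ℝ,
      HasFDerivAt (fun X => multiObj S P Zinit (Function.update Z m X)) L (Z m) ∧
      ∀ W : Matrix (Fin N) (Fin d) ℝ,
        L W = ∑ i, ∑ l,
          ((((3 : ℝ) • (1 : Matrix (Fin N) (Fin N) ℝ) - S m) * Z m
              - (∑ e, P e m • Z e) - Zinit m : Matrix (Fin N) (Fin d) ℝ) i l) * W i l := by
  classical
  set X₀ := Z m with hX₀
  set φ : Fin M → Fin N → Fin d → (Matrix (Fin N) (Fin d) ℝ →L[ℝ] ℝ) :=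
    fun e i l => if e = m then coordCLM i l else 0 with hφ
  set γ : Fin M → Fin N → Fin d → ℝ := fun e i l => if e = m then 0 else Z e i l with hγ
  have key : ∀ (X : Matrix (Fin N) (Fin d) ℝ) e i l,
      Function.update Z m X e i l = φ e i l X + γ e i l := by
    intro X e i l
    by_cases h : e = m
    · subst h; simp [hφ, hγ, Function.update]
    · simp [hφ, hγ, Function.update, h]
  have hf : (fun X => multiObj S P Zinit (Function.update Z m X)) = fun X =>
      (1/4 : ℝ) * ∑ m', ∑ i, ∑ j, S m' i j *
          ∑ l, ((φ m' i l - φ m' j l) X + (γ m' i l - γ m' j l)) ^ 2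
      + (1/4 : ℝ) * ∑ e, ∑ n, P e n *
          ∑ i, ∑ l, ((φ e i l - φ n i l) X + (γ e i l - γ n i l)) ^ 2
      + (1/2 : ℝ) * ∑ m', ∑ i, ∑ l, (φ m' i l X + (γ m' i l - Zinit m' i l)) ^ 2 := by
    funext X
    have habcd : ∀ a b c d : ℝ, a - c + b - d = a + b - (c + d) := by intros; ring
    simp only [multiObj, key, ContinuousLinearMap.sub_apply, habcd, ← add_sub_assoc]
  set L₀ : Matrix (Fin N) (Fin d) ℝ →L[ℝ] ℝ :=
    (1/4 : ℝ) • (∑ m', ∑ i, ∑ j, S m' i j •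
        ∑ l, (2 * ((φ m' i l - φ m' j l) X₀ + (γ m' i l - γ m' j l))) • (φ m' i l - φ m' j l))
    + (1/4 : ℝ) • (∑ e, ∑ n, P e n •
        ∑ i, ∑ l, (2 * ((φ e i l - φ n i l) X₀ + (γ e i l - γ n i l))) • (φ e i l - φ n i l))
    + (1/2 : ℝ) • (∑ m', ∑ i, ∑ l,
        (2 * (φ m' i l X₀ + (γ m' i l - Zinit m' i l))) • φ m' i l) with hL₀
  refine ⟨L₀, ?_, ?_⟩
  · rw [hf]
    exact (((HasFDerivAt.fun_sum fun m' _ => HasFDerivAt.fun_sum fun i _ => HasFDerivAt.fun_sum fun j _ =>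
        (HasFDerivAt.fun_sum fun l _ => hasFDerivAt_affine_sq _ _ _).const_mul _).const_mul
        (1/4 : ℝ)).add
      (((HasFDerivAt.fun_sum fun e _ => HasFDerivAt.fun_sum fun n _ =>
        (HasFDerivAt.fun_sum fun i _ => HasFDerivAt.fun_sum fun l _ =>
          hasFDerivAt_affine_sq _ _ _).const_mul _).const_mul (1/4 : ℝ)))).add
      ((HasFDerivAt.fun_sum fun m' _ => HasFDerivAt.fun_sum fun i _ => HasFDerivAt.fun_sum fun l _ =>
        hasFDerivAt_affine_sq _ _ _).const_mul (1/2 : ℝ))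
  · intro W
    have hL : L₀ W =
        (1/4 : ℝ) * ∑ m', ∑ i, ∑ j, S m' i j *
            ∑ l, (2 * ((φ m' i l - φ m' j l) X₀ + (γ m' i l - γ m' j l))) *
              ((φ m' i l - φ m' j l) W)
      + (1/4 : ℝ) * ∑ e, ∑ n, P e n *
            ∑ i, ∑ l, (2 * ((φ e i l - φ n i l) X₀ + (γ e i l - γ n i l))) *
              ((φ e i l - φ n i l) W)
      + (1/2 : ℝ) * ∑ m', ∑ i, ∑ l,
            (2 * (φ m' i l X₀ + (γ m' i l - Zinit m' i l))) * (φ m' i l W) := by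
      simp only [hL₀, ContinuousLinearMap.add_apply, ContinuousLinearMap.coe_smul',
        Pi.smul_apply, ContinuousLinearMap.coe_sum', Finset.sum_apply, smul_eq_mul,
        Finset.mul_sum]
    have hsmji : ∀ i j, S m j i = S m i j := fun i j => congr_fun (congr_fun (hS_symm m) i) j
    have hpmn : ∀ n, P m n = P n m := fun n => by
      simpa using congr_fun (congr_fun hP_symm n) m
    -- Part A
    have hAsum : (∑ m', ∑ i, ∑ j, S m' i j *
          ∑ l, (2 * ((φ m' i l - φ m' j l) X₀ + (γ m' i l - γ m' j l))) *
            ((φ m' i l - φ m' j l) W))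
        = ∑ i, ∑ j, S m i j * ∑ l, (2 * (X₀ i l - X₀ j l)) * (W i l - W j l) := by
      rw [Finset.sum_eq_single m]
      · simp [hφ, hγ]
      · intro b _ hb; simp [hφ, hγ, hb]
      · simp
    have hAval : (1/4 : ℝ) * (∑ i, ∑ j, S m i j *
          ∑ l, (2 * (X₀ i l - X₀ j l)) * (W i l - W j l))
        = ∑ i, ∑ l, (X₀ i l - (S m * X₀) i l) * W i l := by
      have hsplit : ∀ i j, S m i j * ∑ l, (2 * (X₀ i l - X₀ j l)) * (W i l - W j l)
          = (∑ l, 2 * S m i j * (X₀ i l - X₀ j l) * W i l)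
            - ∑ l, 2 * S m i j * (X₀ i l - X₀ j l) * W j l := by
        intro i j
        rw [Finset.mul_sum, ← Finset.sum_sub_distrib]
        exact Finset.sum_congr rfl fun l _ => by ring
      have hswap : (∑ i, ∑ j, ∑ l, 2 * S m i j * (X₀ i l - X₀ j l) * W j l)
          = - ∑ i, ∑ j, ∑ l, 2 * S m i j * (X₀ i l - X₀ j l) * W i l := by
        rw [Finset.sum_comm, ← Finset.sum_neg_distrib]
        refine Finset.sum_congr rfl fun i _ => ?_
        rw [← Finset.sum_neg_distrib]
        refine Finset.sum_congr rfl fun j _ => ?_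
        rw [← Finset.sum_neg_distrib]
        refine Finset.sum_congr rfl fun l _ => ?_
        rw [hsmji i j]; ring
      have hcollect : ∀ i, (∑ j, ∑ l, 2 * S m i j * (X₀ i l - X₀ j l) * W i l)
          = ∑ l, 2 * (X₀ i l - (S m * X₀) i l) * W i l := by
        intro i
        rw [Finset.sum_comm]
        refine Finset.sum_congr rfl fun l _ => ?_
        have h1 : (∑ j, 2 * S m i j * (X₀ i l - X₀ j l) * W i l)
            = 2 * ((∑ j, S m i j * X₀ i l) - ∑ j, S m i j * X₀ j l) * W i l := by
          rw [← Finset.sum_sub_distrib, Finset.mul_sum, Finset.sum_mul]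
          exact Finset.sum_congr rfl fun j _ => by ring
        rw [h1, ← Finset.sum_mul, hS_row m i, one_mul, Matrix.mul_apply]
      calc (1/4 : ℝ) * (∑ i, ∑ j, S m i j *
              ∑ l, (2 * (X₀ i l - X₀ j l)) * (W i l - W j l))
          = (1/4 : ℝ) * ((∑ i, ∑ j, ∑ l, 2 * S m i j * (X₀ i l - X₀ j l) * W i l)
              - ∑ i, ∑ j, ∑ l, 2 * S m i j * (X₀ i l - X₀ j l) * W j l) := by
            rw [← Finset.sum_sub_distrib]
            congr 1
            refine Finset.sum_congr rfl fun i _ => ?_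
            rw [← Finset.sum_sub_distrib]
            exact Finset.sum_congr rfl fun j _ => hsplit i j
        _ = (1/2 : ℝ) * ∑ i, ∑ j, ∑ l, 2 * S m i j * (X₀ i l - X₀ j l) * W i l := by
            rw [hswap]; ring
        _ = (1/2 : ℝ) * ∑ i, ∑ l, 2 * (X₀ i l - (S m * X₀) i l) * W i l := by
            rw [Finset.sum_congr rfl fun i _ => hcollect i]
        _ = ∑ i, ∑ l, (X₀ i l - (S m * X₀) i l) * W i l := by
            rw [Finset.mul_sum]
            refine Finset.sum_congr rfl fun i _ => ?_
            rw [Finset.mul_sum]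
            exact Finset.sum_congr rfl fun l _ => by ring
    -- Part B
    have hBsum : (∑ e, ∑ n, P e n *
          ∑ i, ∑ l, (2 * ((φ e i l - φ n i l) X₀ + (γ e i l - γ n i l))) *
            ((φ e i l - φ n i l) W))
        = (∑ n, P m n * ∑ i, ∑ l, (2 * (X₀ i l - Z n i l)) * W i l)
          + ∑ e, P e m * ∑ i, ∑ l, (2 * (X₀ i l - Z e i l)) * W i l := by
      have ht : ∀ e n, P e n * ∑ i, ∑ l, (2 * ((φ e i l - φ n i l) X₀ + (γ e i l - γ n i l))) *
            ((φ e i l - φ n i l) W)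
          = (if e = m then P m n * ∑ i, ∑ l, (2 * (X₀ i l - Z n i l)) * W i l else 0)
            + (if n = m then P e m * ∑ i, ∑ l, (2 * (X₀ i l - Z e i l)) * W i l else 0) := by
        intro e n
        by_cases he : e = m <;> by_cases hn : n = m
        · subst he; subst hn; simp [hφ, hγ, hX₀]
        · subst he
          rw [if_pos rfl, if_neg hn, add_zero]
          simp only [hφ, hγ, if_pos rfl, if_neg hn, sub_zero, zero_sub, add_zero, zero_add,
            ContinuousLinearMap.sub_apply, ContinuousLinearMap.zero_apply,
            ContinuousLinearMap.neg_apply, coordCLM_apply]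
          congr 1
          all_goals exact Finset.sum_congr rfl fun i _ => Finset.sum_congr rfl fun l _ => by ring
        · subst hn
          rw [if_neg he, if_pos rfl, zero_add]
          simp only [hφ, hγ, if_pos rfl, if_neg he, sub_zero, zero_sub, add_zero, zero_add,
            ContinuousLinearMap.sub_apply, ContinuousLinearMap.zero_apply,
            ContinuousLinearMap.neg_apply, coordCLM_apply]
          congr 1
          all_goals exact Finset.sum_congr rfl fun i _ => Finset.sum_congr rfl fun l _ => by ring
        · simp [hφ, hγ, he, hn]
      rw [Finset.sum_congr rfl fun e _ => Finset.sum_congr rfl fun n _ => ht e n]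
      rw [Finset.sum_comm]
      simp only [Finset.sum_add_distrib]
      congr 1
      · rw [Finset.sum_comm]
        simp [Finset.sum_ite_eq', Finset.mem_univ]
      · simp [Finset.sum_ite_eq', Finset.mem_univ]
    have hBval : (1/4 : ℝ) * ((∑ n, P m n * ∑ i, ∑ l, (2 * (X₀ i l - Z n i l)) * W i l)
          + ∑ e, P e m * ∑ i, ∑ l, (2 * (X₀ i l - Z e i l)) * W i l)
        = ∑ i, ∑ l, (X₀ i l - ∑ e, P e m * Z e i l) * W i l := by
      have h2 : (∑ n, P m n * ∑ i, ∑ l, (2 * (X₀ i l - Z n i l)) * W i l)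
          = ∑ e, P e m * ∑ i, ∑ l, (2 * (X₀ i l - Z e i l)) * W i l :=
        Finset.sum_congr rfl fun n _ => by rw [hpmn n]
      rw [h2]
      have hcol : (∑ e, P e m) = 1 := by
        rw [← hP_row m]
        exact Finset.sum_congr rfl fun e _ => (hpmn e).symm
      calc (1/4 : ℝ) * ((∑ e, P e m * ∑ i, ∑ l, (2 * (X₀ i l - Z e i l)) * W i l)
              + ∑ e, P e m * ∑ i, ∑ l, (2 * (X₀ i l - Z e i l)) * W i l)
          = ∑ e, ∑ i, ∑ l, P e m * (X₀ i l - Z e i l) * W i l := by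
            rw [← two_mul]
            simp only [Finset.mul_sum]
            refine Finset.sum_congr rfl fun e _ => Finset.sum_congr rfl fun i _ =>
              Finset.sum_congr rfl fun l _ => ?_
            ring
        _ = ∑ i, ∑ l, (X₀ i l - ∑ e, P e m * Z e i l) * W i l := by
            rw [Finset.sum_comm]
            refine Finset.sum_congr rfl fun i _ => ?_
            rw [Finset.sum_comm]
            refine Finset.sum_congr rfl fun l _ => ?_
            calc (∑ e, P e m * (X₀ i l - Z e i l) * W i l)
                = (∑ e, (P e m * X₀ i l * W i l - P e m * Z e i l * W i l)) :=
                  Finset.sum_congr rfl fun e _ => by ring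
              _ = (∑ e, P e m * X₀ i l * W i l) - ∑ e, P e m * Z e i l * W i l :=
                  Finset.sum_sub_distrib _ _
              _ = (∑ e, P e m) * X₀ i l * W i l - (∑ e, P e m * Z e i l) * W i l := by
                  simp only [Finset.sum_mul]
              _ = (X₀ i l - ∑ e, P e m * Z e i l) * W i l := by rw [hcol]; ring
    -- Part C
    have hCsum : (∑ m', ∑ i, ∑ l, (2 * (φ m' i l X₀ + (γ m' i l - Zinit m' i l))) * (φ m' i l W))
        = ∑ i, ∑ l, (2 * (X₀ i l - Zinit m i l)) * W i l := by
      rw [Finset.sum_eq_single m]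
      · simp only [hφ, hγ, if_pos rfl, coordCLM_apply, zero_sub]
        exact Finset.sum_congr rfl fun i _ => Finset.sum_congr rfl fun l _ => by ring
      · intro b _ hb; simp [hφ, hγ, hb]
      · simp
    have hCval : (1/2 : ℝ) * (∑ i, ∑ l, (2 * (X₀ i l - Zinit m i l)) * W i l)
        = ∑ i, ∑ l, (X₀ i l - Zinit m i l) * W i l := by
      rw [Finset.mul_sum]
      refine Finset.sum_congr rfl fun i _ => ?_
      rw [Finset.mul_sum]
      exact Finset.sum_congr rfl fun l _ => by ring
    rw [hL, hAsum, hBsum, hCsum, hAval, hBval, hCval]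
    rw [← Finset.sum_add_distrib, ← Finset.sum_add_distrib]
    refine Finset.sum_congr rfl fun i _ => ?_
    rw [← Finset.sum_add_distrib, ← Finset.sum_add_distrib]
    refine Finset.sum_congr rfl fun l _ => ?_
    simp only [Matrix.sub_apply, Matrix.mul_apply, Matrix.smul_apply, Matrix.one_apply,
      Matrix.sum_apply, smul_eq_mul, sub_mul, mul_ite, mul_one, mul_zero, ite_mul, zero_mul,
      Finset.sum_sub_distrib, Finset.sum_ite_eq]
    simp only [Finset.mem_univ, if_true]
    ring
end
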